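/- Let X and Y be smooth real normed spaces with dim X ≥ 2, equipped with their unique compatible semi-inner products, and let f : X → Y be a surjective mapping such that |[f(x), f(y)]| = |[x, y]| for all x, y ∈ X. Then there exist a surjective linear isometry U : X → Y and a function σ : X → ℝ with |σ(x)| = 1 for all x, such that f(x) = σ(x) U x for all x ∈ X. -/

import Mathlib

open RCLike

/-- A support functional at `x`: a norm-one continuous linear functional with `φ x = ‖x‖`. -/
def SuppFunc (𝕜 : Type*) [RCLike 𝕜] {X : Type*} [NormedAddCommGroup X] [NormedSpace 𝕜 X]
    (x : X) (φ : X →L[𝕜] 𝕜) : Prop :=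
  ‖φ‖ = 1 ∧ φ x = (‖x‖ : 𝕜)

/-- `X` is smooth at `x` if there is a unique support functional at `x`. -/
def NormSmoothAt (𝕜 : Type*) [RCLike 𝕜] {X : Type*} [NormedAddCommGroup X] [NormedSpace 𝕜 X]
    (x : X) : Prop := ∃! φ : X →L[𝕜] 𝕜, SuppFunc 𝕜 x φ

/-- `X` is smooth if it is smooth at every nonzero point. -/
def NormSmooth (𝕜 : Type*) (X : Type*) [RCLike 𝕜] [NormedAddCommGroup X] [NormedSpace 𝕜 X] :
    Prop := ∀ x : X, x ≠ 0 → NormSmoothAt 𝕜 x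

/-- `sip` is the canonical semi-inner product `[u,v] = ‖v‖ * φ_v u` built from support
functionals (on a smooth space this pins `sip` down uniquely). -/
def IsCompatSIP (𝕜 : Type*) {X : Type*} [RCLike 𝕜] [NormedAddCommGroup X] [NormedSpace 𝕜 X]
    (sip : X → X → 𝕜) : Prop :=
  (∀ u : X, sip u 0 = 0) ∧
  ∀ (u v : X) (φ : X →L[𝕜] 𝕜), SuppFunc 𝕜 v φ → sip u v = (‖v‖ : 𝕜) * φ u

/-- Birkhoff–James orthogonality: `x ⊥ y` iff `‖x + a • y‖ ≥ ‖x‖` for all scalars. -/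
def BJOrth (𝕜 : Type*) {X : Type*} [RCLike 𝕜] [NormedAddCommGroup X] [NormedSpace 𝕜 X]
    (x y : X) : Prop := ∀ a : 𝕜, ‖x‖ ≤ ‖x + a • y‖

/-- A semi-inner product compatible with the norm: additive and homogeneous in the first
variable, conjugate-homogeneous in the second, positive definite, Cauchy–Schwarz, and
`[x,x] = ‖x‖²`. -/
def IsSIP (𝕜 : Type*) {X : Type*} [RCLike 𝕜] [NormedAddCommGroup X] [NormedSpace 𝕜 X]
    (sip : X → X → 𝕜) : Prop :=
  (∀ x y z : X, sip (x + y) z = sip x z + sip y z) ∧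
  (∀ (a : 𝕜) (x y : X), sip (a • x) y = a * sip x y) ∧
  (∀ (a : 𝕜) (x y : X), sip x (a • y) = (starRingEnd 𝕜) a * sip x y) ∧
  (∀ x : X, x ≠ 0 → 0 < re (sip x x) ∧ im (sip x x) = 0) ∧
  (∀ x y : X, ‖sip x y‖ ≤ Real.sqrt (re (sip x x)) * Real.sqrt (re (sip y y))) ∧
  (∀ x : X, sip x x = (‖x‖ : 𝕜) ^ 2)

set_option maxHeartbeats 1000000
set_option synthInstance.maxHeartbeats 400000

section Helpers
variable {Z : Type*} [NormedAddCommGroup Z] [NormedSpace ℝ Z]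

lemma ofReal_real (r : ℝ) : (RCLike.ofReal r : ℝ) = r := by simp

lemma suppFunc_exists {z : Z} (hz : z ≠ 0) : ∃ φ : Z →L[ℝ] ℝ, SuppFunc ℝ z φ := by
  obtain ⟨g, h1, h2⟩ := exists_dual_vector ℝ z (norm_ne_zero_iff.mpr hz)
  exact ⟨g, h1, by simpa using h2⟩

variable {sip : Z → Z → ℝ}

lemma sip_self (h : IsCompatSIP ℝ sip) (z : Z) : sip z z = ‖z‖ ^ 2 := by
  rcases eq_or_ne z 0 with rfl | hz
  · simp [h.1]
  · obtain ⟨φ, hφ⟩ := suppFunc_exists hz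
    have h2 : φ z = ‖z‖ := by simpa using hφ.2
    rw [h.2 z z φ hφ, ofReal_real, h2]; ring

lemma sip_add_left (h : IsCompatSIP ℝ sip) (a b v : Z) :
    sip (a + b) v = sip a v + sip b v := by
  rcases eq_or_ne v 0 with rfl | hv
  · simp [h.1]
  · obtain ⟨φ, hφ⟩ := suppFunc_exists hv
    rw [h.2 _ _ φ hφ, h.2 _ _ φ hφ, h.2 _ _ φ hφ, map_add, ofReal_real]; ring

lemma sip_smul_left (h : IsCompatSIP ℝ sip) (t : ℝ) (a v : Z) :
    sip (t • a) v = t * sip a v := by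
  rcases eq_or_ne v 0 with rfl | hv
  · simp [h.1]
  · obtain ⟨φ, hφ⟩ := suppFunc_exists hv
    rw [h.2 _ _ φ hφ, h.2 _ _ φ hφ, map_smul, ofReal_real]
    simp only [smul_eq_mul]; ring

lemma sip_zero_left (h : IsCompatSIP ℝ sip) (v : Z) : sip 0 v = 0 := by
  have := sip_smul_left h 0 0 v; simpa using this

lemma exists_clm_ne (L : List Z) (h0 : ∀ e ∈ L, e ≠ 0) :
    ∃ θ : Z →L[ℝ] ℝ, ∀ e ∈ L, θ e ≠ 0 := by
  classical
  induction L with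
  | nil => exact ⟨0, by simp⟩
  | cons a L ih =>
    obtain ⟨θ, hθ⟩ := ih (fun e he => h0 e (List.mem_cons_of_mem a he))
    obtain ⟨χ, hχ1, hχ2⟩ := exists_dual_vector ℝ a (norm_ne_zero_iff.mpr (h0 a List.mem_cons_self))
    have hχa : χ a ≠ 0 := by
      rw [hχ2]
      exact_mod_cast norm_ne_zero_iff.mpr (h0 a List.mem_cons_self)
    obtain ⟨t, ht⟩ := Infinite.exists_notMem_finset
      (((a :: L).map (fun x => -θ x / χ x)).toFinset)
    refine ⟨θ + t • χ, ?_⟩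
    intro x hx hcon
    simp only [ContinuousLinearMap.add_apply, ContinuousLinearMap.coe_smul',
      Pi.smul_apply, smul_eq_mul] at hcon
    by_cases hcx : χ x = 0
    · rcases List.mem_cons.mp hx with rfl | hxL
      · exact hχa hcx
      · exact hθ x hxL (by simpa [hcx] using hcon)
    · apply ht
      rw [List.mem_toFinset, List.mem_map]
      refine ⟨x, hx, ?_⟩
      field_simp
      linarith


lemma clm_norm_smul {W : Type*} [NormedAddCommGroup W] [NormedSpace ℝ W] (c : ℝ)
    (Φ : W →L[ℝ] ℝ) : ‖c • Φ‖ = |c| * ‖Φ‖ := by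
  rw [norm_smul c Φ, Real.norm_eq_abs]


lemma exists_supp_forall_ne (L : List Z) (hL : L ≠ []) (h0 : ∀ e ∈ L, e ≠ 0) :
    ∃ (v : Z) (ψ : Z →L[ℝ] ℝ), v ≠ 0 ∧ SuppFunc ℝ v ψ ∧ ∀ e ∈ L, ψ e ≠ 0 := by
  classical
  set V : Submodule ℝ Z := Submodule.span ℝ {x | x ∈ L} with hVdef
  haveI : FiniteDimensional ℝ V := FiniteDimensional.span_of_finite ℝ L.finite_toSet
  obtain ⟨θ, hθ⟩ := exists_clm_ne L h0
  set ψ : V →L[ℝ] ℝ := θ.comp V.subtypeL with hψdef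
  have hmemV : ∀ e ∈ L, e ∈ V := fun e heL => Submodule.subset_span heL
  have hψe : ∀ e (heL : e ∈ L), ψ ⟨e, hmemV e heL⟩ ≠ 0 := by
    intro e heL
    simpa [hψdef] using hθ e heL
  obtain ⟨a, ha⟩ := List.exists_mem_of_ne_nil L hL
  haveI : Nontrivial V := by
    refine ⟨⟨a, hmemV a ha⟩, 0, fun hcon => h0 a ha ?_⟩
    simpa using congrArg (Subtype.val) hcon
  have hψne : ψ ≠ 0 := by
    intro hc
    exact hψe a ha (by rw [hc]; rfl)
  have hnorm : ‖ψ‖ ≠ 0 := by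
    intro hc
    exact hψne (by rwa [ContinuousLinearMap.opNorm_zero_iff] at hc)
  set ψ1 : V →L[ℝ] ℝ := ‖ψ‖⁻¹ • ψ with hψ1def
  have hψ1norm : ‖ψ1‖ = 1 := by
    rw [hψ1def, clm_norm_smul]
    simp [abs_of_nonneg (inv_nonneg.mpr (norm_nonneg ψ)), inv_mul_cancel₀ hnorm]
  have hcpt : IsCompact (Metric.sphere (0:V) 1) := isCompact_sphere 0 1
  have hne : (Metric.sphere (0:V) 1).Nonempty := NormedSpace.sphere_nonempty.mpr zero_le_one
  obtain ⟨v₁, hv₁s, hmax'⟩ := hcpt.exists_isMaxOn hne ψ1.continuous.continuousOn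
  have hmax : ∀ w ∈ Metric.sphere (0:V) 1, ψ1 w ≤ ψ1 v₁ := fun w hw => hmax' hw
  have hv₁ : ‖v₁‖ = 1 := mem_sphere_zero_iff_norm.mp hv₁s
  have hnn : 0 ≤ ψ1 v₁ := by
    have h1 := hmax (-v₁) (by simp [mem_sphere_zero_iff_norm, hv₁])
    rw [map_neg] at h1
    linarith
  have hub : ∀ w : V, |ψ1 w| ≤ ψ1 v₁ * ‖w‖ := by
    intro w
    rcases eq_or_ne w 0 with rfl | hw
    · simp
    · have hwn : ‖w‖ ≠ 0 := norm_ne_zero_iff.mpr hw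
      set w1 : V := ‖w‖⁻¹ • w with hw1
      have hmem : w1 ∈ Metric.sphere (0:V) 1 := by
        rw [mem_sphere_zero_iff_norm, hw1, norm_smul (‖w‖⁻¹) w, Real.norm_eq_abs,
          abs_of_nonneg (inv_nonneg.mpr (norm_nonneg w)), inv_mul_cancel₀ hwn]
      have hmem2 : -w1 ∈ Metric.sphere (0:V) 1 := by
        simpa [mem_sphere_zero_iff_norm, norm_neg] using mem_sphere_zero_iff_norm.mp hmem
      have h1 := hmax _ hmem
      have h2 := hmax _ hmem2
      rw [map_neg] at h2
      have h3 : |ψ1 w1| ≤ ψ1 v₁ := abs_le.mpr ⟨by linarith, h1⟩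
      have h4 : ψ1 w1 = ‖w‖⁻¹ * ψ1 w := by rw [hw1, map_smul]; simp
      rw [h4, abs_mul, abs_of_nonneg (inv_nonneg.mpr (norm_nonneg w))] at h3
      calc |ψ1 w| = ‖w‖ * (‖w‖⁻¹ * |ψ1 w|) := by
            rw [← mul_assoc, mul_inv_cancel₀ hwn, one_mul]
        _ ≤ ‖w‖ * ψ1 v₁ := by nlinarith [norm_nonneg w]
        _ = ψ1 v₁ * ‖w‖ := mul_comm _ _
  have hval : ψ1 v₁ = 1 := by
    have h1 : ‖ψ1‖ ≤ ψ1 v₁ := ψ1.opNorm_le_bound hnn (fun w => by simpa [Real.norm_eq_abs] using hub w)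
    have h2 : ψ1 v₁ ≤ ‖ψ1‖ := by
      calc ψ1 v₁ ≤ |ψ1 v₁| := le_abs_self _
        _ ≤ ‖ψ1‖ * ‖v₁‖ := by simpa [Real.norm_eq_abs] using ψ1.le_opNorm v₁
        _ = ‖ψ1‖ := by rw [hv₁, mul_one]
    rw [hψ1norm] at h1 h2
    linarith
  obtain ⟨Ψ, hΨext, hΨnorm⟩ := exists_extension_norm_eq V ψ1
  refine ⟨(v₁ : Z), Ψ, ?_, ⟨by rw [hΨnorm, hψ1norm], ?_⟩, ?_⟩
  · intro hc
    apply one_ne_zero (α := ℝ)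
    rw [← hv₁]
    simpa using congrArg norm hc
  · have h1 := hΨext v₁
    rw [h1, hval]
    have : ‖(v₁ : Z)‖ = ‖v₁‖ := rfl
    rw [this, hv₁]
    simp
  · intro e heL
    have h1 : Ψ e = ψ1 ⟨e, hmemV e heL⟩ := hΨext ⟨e, hmemV e heL⟩
    rw [h1, hψ1def]
    simp only [ContinuousLinearMap.coe_smul', Pi.smul_apply, smul_eq_mul]
    exact mul_ne_zero (inv_ne_zero hnorm) (hψe e heL)

lemma exists_zero_of_supp_kills (L : List Z) (hL : L ≠ [])
    (hk : ∀ v : Z, v ≠ 0 → ∀ ψ : Z →L[ℝ] ℝ, SuppFunc ℝ v ψ → ∃ e ∈ L, ψ e = 0) :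
    ∃ e ∈ L, e = 0 := by
  by_contra hc
  push_neg at hc
  obtain ⟨v, ψ, hv, hψ, hne⟩ := exists_supp_forall_ne L hL hc
  obtain ⟨e, heL, he0⟩ := hk v hv ψ hψ
  exact hne e heL he0
end Helpers

theorem stmt11 {X Y : Type*} [NormedAddCommGroup X] [NormedSpace ℝ X]
    [NormedAddCommGroup Y] [NormedSpace ℝ Y]
    (hdim : 2 ≤ Module.rank ℝ X)
    (hsmX : NormSmooth ℝ X) (hsmY : NormSmooth ℝ Y)
    (sipX : X → X → ℝ) (hX : IsCompatSIP ℝ sipX)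
    (sipY : Y → Y → ℝ) (hY : IsCompatSIP ℝ sipY)
    (f : X → Y) (hsurj : Function.Surjective f)
    (hf : ∀ x y : X, ‖sipY (f x) (f y)‖ = ‖sipX x y‖) :
    ∃ U : X →ₗ[ℝ] Y, Function.Surjective U ∧ (∀ x : X, ‖U x‖ = ‖x‖) ∧
      ∃ σ : X → ℝ, (∀ x : X, ‖σ x‖ = 1) ∧ ∀ x : X, f x = σ x • U x := by
  classical
  obtain ⟨e, he⟩ : ∃ x : X, x ≠ 0 :=
    rank_pos_iff_exists_ne_zero.mp (lt_of_lt_of_le (by norm_num) hdim)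
  -- basic facts
  have hfn : ∀ x : X, ‖f x‖ = ‖x‖ := by
    intro x
    have h1 := hf x x
    rw [sip_self hY, sip_self hX, Real.norm_eq_abs, Real.norm_eq_abs,
      abs_of_nonneg (sq_nonneg _), abs_of_nonneg (sq_nonneg _)] at h1
    nlinarith [norm_nonneg (f x), norm_nonneg x]
  have hf0 : f 0 = 0 := by
    have h1 := hfn 0
    rw [norm_zero] at h1
    exact norm_eq_zero.mp h1
  have habs : ∀ x z : X, |sipY (f x) (f z)| = |sipX x z| := by
    intro x z
    have h1 := hf x z
    rwa [Real.norm_eq_abs, Real.norm_eq_abs] at h1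
  -- key comparison between support functionals
  have key : ∀ v : Y, v ≠ 0 → ∀ ψ : Y →L[ℝ] ℝ, SuppFunc ℝ v ψ →
      ∃ φ : X →L[ℝ] ℝ, ∀ x : X, |ψ (f x)| = |φ x| := by
    intro v hv ψ hψ
    obtain ⟨z, hz⟩ := hsurj v
    have hz0 : z ≠ 0 := by
      rintro rfl
      rw [hf0] at hz
      exact hv hz.symm
    obtain ⟨φ, hφ⟩ := suppFunc_exists hz0
    refine ⟨φ, fun x => ?_⟩
    have hψz : SuppFunc ℝ (f z) ψ := by rwa [hz]
    have h1 := habs x z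
    rw [hY.2 (f x) (f z) ψ hψz, hX.2 x z φ hφ, ofReal_real, ofReal_real,
      abs_mul, abs_mul, abs_of_nonneg (norm_nonneg (f z)), abs_of_nonneg (norm_nonneg z),
      hfn z] at h1
    exact mul_left_cancel₀ (norm_ne_zero_iff.mpr hz0) h1
  -- homogeneity up to sign
  have hom : ∀ (t : ℝ) (x : X), ∃ γ : ℝ, (γ = 1 ∨ γ = -1) ∧ f (t • x) = (γ * t) • f x := by
    intro t x
    have hker : ∀ v : Y, v ≠ 0 → ∀ ψ : Y →L[ℝ] ℝ, SuppFunc ℝ v ψ →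
        ∃ w ∈ [f (t • x) - t • f x, f (t • x) + t • f x], ψ w = 0 := by
      intro v hv ψ hψ
      obtain ⟨φ, hrel⟩ := key v hv ψ hψ
      have h3 : |ψ (f (t • x))| = |t * ψ (f x)| := by
        rw [hrel (t • x), map_smul, smul_eq_mul, abs_mul, abs_mul, ← hrel x]
      rcases abs_eq_abs.mp h3 with h4 | h4
      · exact ⟨f (t • x) - t • f x, by simp, by
          rw [map_sub, map_smul, smul_eq_mul, h4, sub_self]⟩
      · exact ⟨f (t • x) + t • f x, by simp, by
          rw [map_add, map_smul, smul_eq_mul, h4]; ring⟩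
    obtain ⟨w, hwmem, hw0⟩ := exists_zero_of_supp_kills _ (by simp) hker
    simp only [List.mem_cons, List.not_mem_nil, or_false] at hwmem
    rcases hwmem with rfl | rfl
    · exact ⟨1, Or.inl rfl, by rw [one_mul]; exact sub_eq_zero.mp hw0⟩
    · refine ⟨-1, Or.inr rfl, ?_⟩
      have h5 : f (t • x) = -(t • f x) := by
        rw [eq_neg_iff_add_eq_zero]; exact hw0
      rw [h5, neg_mul, one_mul, neg_smul]
  -- additivity up to signs
  have add4 : ∀ x y : X, ∃ ε δ : ℝ, (ε = 1 ∨ ε = -1) ∧ (δ = 1 ∨ δ = -1) ∧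
      f (x + y) = ε • f x + δ • f y := by
    intro x y
    have hker : ∀ v : Y, v ≠ 0 → ∀ ψ : Y →L[ℝ] ℝ, SuppFunc ℝ v ψ →
        ∃ w ∈ [f (x+y) - f x - f y, f (x+y) - f x + f y,
               f (x+y) + f x + f y, f (x+y) + f x - f y], ψ w = 0 := by
      intro v hv ψ hψ
      obtain ⟨φ, hrel⟩ := key v hv ψ hψ
      have hC : |ψ (f (x+y))| = |φ x + φ y| := by rw [hrel (x+y), map_add]
      rcases abs_eq_abs.mp hC with h1 | h1 <;>
        rcases abs_eq_abs.mp (hrel x) with h2 | h2 <;>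
          rcases abs_eq_abs.mp (hrel y) with h3 | h3
      · exact ⟨f (x+y) - f x - f y, by simp,
          by simp only [map_sub]; rw [h1, h2, h3]; ring⟩
      · exact ⟨f (x+y) - f x + f y, by simp,
          by simp only [map_sub, map_add]; rw [h1, h2, h3]; ring⟩
      · exact ⟨f (x+y) + f x - f y, by simp,
          by simp only [map_sub, map_add]; rw [h1, h2, h3]; ring⟩
      · exact ⟨f (x+y) + f x + f y, by simp,
          by simp only [map_add]; rw [h1, h2, h3]; ring⟩
      · exact ⟨f (x+y) + f x + f y, by simp,
          by simp only [map_add]; rw [h1, h2, h3]; ring⟩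
      · exact ⟨f (x+y) + f x - f y, by simp,
          by simp only [map_sub, map_add]; rw [h1, h2, h3]; ring⟩
      · exact ⟨f (x+y) - f x + f y, by simp,
          by simp only [map_sub, map_add]; rw [h1, h2, h3]; ring⟩
      · exact ⟨f (x+y) - f x - f y, by simp,
          by simp only [map_sub]; rw [h1, h2, h3]; ring⟩
    obtain ⟨w, hwmem, hw0⟩ := exists_zero_of_supp_kills _ (by simp) hker
    simp only [List.mem_cons, List.not_mem_nil, or_false] at hwmem
    rcases hwmem with rfl | rfl | rfl | rfl
    · refine ⟨1, 1, Or.inl rfl, Or.inl rfl, ?_⟩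
      have h5 : f (x+y) - ((1:ℝ) • f x + (1:ℝ) • f y) = 0 := by
        rw [one_smul, one_smul, ← hw0]; abel
      exact sub_eq_zero.mp h5
    · refine ⟨1, -1, Or.inl rfl, Or.inr rfl, ?_⟩
      have h5 : f (x+y) - ((1:ℝ) • f x + (-1:ℝ) • f y) = 0 := by
        rw [one_smul, neg_one_smul, ← hw0]; abel
      exact sub_eq_zero.mp h5
    · refine ⟨-1, -1, Or.inr rfl, Or.inr rfl, ?_⟩
      have h5 : f (x+y) - ((-1:ℝ) • f x + (-1:ℝ) • f y) = 0 := by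
        rw [neg_one_smul, neg_one_smul, ← hw0]; abel
      exact sub_eq_zero.mp h5
    · refine ⟨-1, 1, Or.inr rfl, Or.inl rfl, ?_⟩
      have h5 : f (x+y) - ((-1:ℝ) • f x + (1:ℝ) • f y) = 0 := by
        rw [neg_one_smul, one_smul, ← hw0]; abel
      exact sub_eq_zero.mp h5
  -- the pivot e and the sign function s
  have hee : sipX e e = ‖e‖ ^ 2 := sip_self hX e
  have hen : ‖e‖ ^ 2 ≠ 0 := pow_ne_zero 2 (norm_ne_zero_iff.mpr he)
  have heG : sipX e e ≠ 0 := by rw [hee]; exact hen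
  set s : X → ℝ := fun x => sipY (f x) (f e) / sipX x e with hsdef
  set u0 : X → Y := fun x => s x • f x with hu0def
  set u : X → Y := fun x => if sipX x e = 0 then u0 (x + e) - u0 e else u0 x with hudef
  have hu0x : ∀ x : X, u0 x = s x • f x := fun x => rfl
  have sEq : ∀ x : X, sipY (f x) (f e) = s x * sipX x e := by
    intro x
    by_cases hx : sipX x e = 0
    · have h1 := habs x e
      rw [hx, abs_zero, abs_eq_zero] at h1
      rw [h1, hx, mul_zero]
    · show sipY (f x) (f e) = sipY (f x) (f e) / sipX x e * sipX x e
      field_simp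
  have sPM : ∀ x : X, sipX x e ≠ 0 → s x = 1 ∨ s x = -1 := by
    intro x hx
    have h1 := habs x e
    rw [sEq x, abs_mul] at h1
    have h2 : |s x| = 1 :=
      mul_right_cancel₀ (abs_ne_zero.mpr hx) (by rw [one_mul]; exact h1)
    exact (abs_eq (by norm_num : (0:ℝ) ≤ 1)).mp h2
  have se1 : s e = 1 := by
    show sipY (f e) (f e) / sipX e e = 1
    rw [sip_self hY, hfn, hee]
    exact div_self hen
  have hu0e : u0 e = f e := by rw [hu0x e, se1, one_smul]
  -- homogeneity of u0 on good points
  have homG : ∀ (t : ℝ) (x : X), t ≠ 0 → sipX x e ≠ 0 → u0 (t • x) = t • u0 x := by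
    intro t x ht hx
    obtain ⟨γ, hγpm, hγ⟩ := hom t x
    have hγ2 : γ * γ = 1 := by rcases hγpm with rfl | rfl <;> norm_num
    have hden : sipX (t • x) e = t * sipX x e := sip_smul_left hX t x e
    have hstx : s (t • x) = γ * s x := by
      have h1 : s (t • x) * sipX (t • x) e = γ * s x * sipX (t • x) e := by
        rw [← sEq (t • x), hγ, sip_smul_left hY, sEq x, hden]; ring
      exact mul_right_cancel₀ (by rw [hden]; exact mul_ne_zero ht hx) h1
    rw [hu0x (t • x), hu0x x, hstx, hγ, smul_smul, smul_smul]
    congr 1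
    linear_combination (s x * t) * hγ2
  -- additivity of u0 on good points
  have addG : ∀ x y : X, sipX x e ≠ 0 → sipX y e ≠ 0 → sipX (x + y) e ≠ 0 →
      u0 (x + y) = u0 x + u0 y := by
    intro x y hx hy hxy
    obtain ⟨ε, δ, hε, hδ, hfeq⟩ := add4 x y
    obtain hsx := sPM x hx
    obtain hsy := sPM y hy
    obtain hS := sPM (x + y) hxy
    have hsum : sipX (x + y) e = sipX x e + sipX y e := sip_add_left hX x y e
    have hE : s (x + y) * (sipX x e + sipX y e)
        = ε * (s x * sipX x e) + δ * (s y * sipX y e) := by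
      rw [← hsum, ← sEq (x+y), hfeq, sip_add_left hY, sip_smul_left hY, sip_smul_left hY,
        sEq x, sEq y]
    have hS2 : s (x + y) * s (x + y) = 1 := by rcases hS with h | h <;> rw [h] <;> norm_num
    have hx2 : s x * s x = 1 := by rcases hsx with h | h <;> rw [h] <;> norm_num
    have hy2 : s y * s y = 1 := by rcases hsy with h | h <;> rw [h] <;> norm_num
    have hpq : sipX x e + sipX y e ≠ 0 := by rw [← hsum]; exact hxy
    have hE2 : sipX x e + sipX y e
        = (s (x+y) * ε * s x) * sipX x e + (s (x+y) * δ * s y) * sipX y e := by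
      calc sipX x e + sipX y e = s (x+y) * (s (x+y) * (sipX x e + sipX y e)) := by
            rw [← mul_assoc, hS2, one_mul]
        _ = s (x+y) * (ε * (s x * sipX x e) + δ * (s y * sipX y e)) := by rw [hE]
        _ = (s (x+y) * ε * s x) * sipX x e + (s (x+y) * δ * s y) * sipX y e := by ring
    have ha : s (x+y) * ε * s x = 1 ∨ s (x+y) * ε * s x = -1 := by
      rcases hS with h | h <;> rcases hε with h' | h' <;> rcases hsx with h'' | h'' <;>
        rw [h, h', h''] <;> norm_num
    have hb : s (x+y) * δ * s y = 1 ∨ s (x+y) * δ * s y = -1 := by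
      rcases hS with h | h <;> rcases hδ with h' | h' <;> rcases hsy with h'' | h'' <;>
        rw [h, h', h''] <;> norm_num
    have ha1 : s (x+y) * ε * s x = 1 := by
      rcases ha with h | h
      · exact h
      · exfalso
        rcases hb with h' | h'
        · rw [h, h'] at hE2
          exact hx (by linarith)
        · rw [h, h'] at hE2
          exact hpq (by linarith)
    have hb1 : s (x+y) * δ * s y = 1 := by
      rcases hb with h | h
      · exact h
      · exfalso
        rw [ha1, h] at hE2
        exact hy (by linarith)
    have hSε : s (x+y) * ε = s x := by linear_combination (s x) * ha1 - (s (x+y) * ε) * hx2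
    have hSδ : s (x+y) * δ = s y := by linear_combination (s y) * hb1 - (s (x+y) * δ) * hy2
    calc u0 (x + y) = s (x + y) • f (x + y) := hu0x (x + y)
      _ = s (x+y) • (ε • f x + δ • f y) := by rw [hfeq]
      _ = (s (x+y) * ε) • f x + (s (x+y) * δ) • f y := by
          rw [smul_add, smul_smul, smul_smul]
      _ = s x • f x + s y • f y := by rw [hSε, hSδ]
      _ = u0 x + u0 y := by rw [hu0x x, hu0x y]
  -- u on good/bad points
  have uG : ∀ x : X, sipX x e ≠ 0 → u x = u0 x := by
    intro x hx
    show (if sipX x e = 0 then u0 (x + e) - u0 e else u0 x) = u0 x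
    rw [if_neg hx]
  have uN : ∀ x : X, sipX x e = 0 → u x = u0 (x + e) - u0 e := by
    intro x hx
    show (if sipX x e = 0 then u0 (x + e) - u0 e else u0 x) = u0 (x + e) - u0 e
    rw [if_pos hx]
  have hshift : ∀ x : X, sipX x e = 0 → ∀ c : ℝ, c ≠ 0 →
      u0 (x + c • e) = u x + c • u0 e := by
    intro x hx c hc
    rcases eq_or_ne c 1 with rfl | hc1
    · rw [uN x hx, one_smul, one_smul]
      abel
    · have h1 : sipX (x + e) e ≠ 0 := by
        rw [sip_add_left hX, hx, zero_add]; exact heG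
      have h2 : sipX ((c - 1) • e) e ≠ 0 := by
        rw [sip_smul_left hX, hee]
        exact mul_ne_zero (sub_ne_zero.mpr hc1) hen
      have h3 : sipX (x + e + (c - 1) • e) e ≠ 0 := by
        rw [sip_add_left hX, sip_add_left hX, sip_smul_left hX, hx, hee, zero_add]
        intro hcon
        have h4 : c * ‖e‖ ^ 2 = 0 := by linear_combination hcon
        rcases mul_eq_zero.mp h4 with h5 | h5
        · exact hc h5
        · exact hen h5
      have h4 : x + c • e = x + e + (c - 1) • e := by
        rw [sub_smul, one_smul]; abel
      rw [h4, addG (x + e) ((c - 1) • e) h1 h2 h3, homG (c - 1) e (sub_ne_zero.mpr hc1) heG,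
        uN x hx, sub_smul, one_smul]
      abel
  -- u agrees with ± f
  have uPM : ∀ x : X, u x = f x ∨ u x = -f x := by
    intro x
    by_cases hx : sipX x e = 0
    · obtain ⟨ε, δ, hε, hδ, hfeq⟩ := add4 x e
      have hfxe : sipY (f x) (f e) = 0 := by
        have h1 := habs x e
        rw [hx, abs_zero, abs_eq_zero] at h1
        exact h1
      have hsipxe : sipX (x + e) e = ‖e‖ ^ 2 := by
        rw [sip_add_left hX, hx, zero_add, hee]
      have hsxe : s (x + e) = δ := by
        have h1 : s (x + e) * sipX (x + e) e = δ * sipX (x + e) e := by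
          rw [← sEq (x + e), hfeq, sip_add_left hY, sip_smul_left hY, sip_smul_left hY, hfxe,
            sip_self hY, hfn, hsipxe]
          ring
        exact mul_right_cancel₀ (by rw [hsipxe]; exact hen) h1
      have hδ2 : δ * δ = 1 := by rcases hδ with h | h <;> rw [h] <;> norm_num
      have h2 : u x = (δ * ε) • f x := by
        rw [uN x hx, hu0e, hu0x (x + e), hsxe, hfeq, smul_add, smul_smul, smul_smul, hδ2,
          one_smul]
        abel
      rcases hε with h | h <;> rcases hδ with h' | h' <;> rw [h, h'] at h2
      · left; rw [h2]; norm_num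
      · right; rw [h2]; norm_num
      · right; rw [h2]; norm_num
      · left; rw [h2]; norm_num
    · rcases sPM x hx with h | h
      · left; rw [uG x hx, hu0x x, h, one_smul]
      · right; rw [uG x hx, hu0x x, h, neg_one_smul]
  -- u is homogeneous
  have hsmul : ∀ (t : ℝ) (x : X), u (t • x) = t • u x := by
    intro t x
    rcases eq_or_ne t 0 with rfl | ht
    · rw [zero_smul, zero_smul]
      have h0 : sipX (0 : X) e = 0 := sip_zero_left hX e
      rw [uN 0 h0, zero_add, sub_self]
    · by_cases hx : sipX x e = 0
      · have htx : sipX (t • x) e = 0 := by rw [sip_smul_left hX, hx, mul_zero]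
        rw [uN _ htx]
        have h4 : t • x + e = t • (x + t⁻¹ • e) := by
          rw [smul_add, smul_smul, mul_inv_cancel₀ ht, one_smul]
        have h5 : sipX (x + t⁻¹ • e) e ≠ 0 := by
          rw [sip_add_left hX, hx, zero_add, sip_smul_left hX, hee]
          exact mul_ne_zero (inv_ne_zero ht) hen
        rw [h4, homG t _ ht h5, hshift x hx t⁻¹ (inv_ne_zero ht), smul_add, smul_smul,
          mul_inv_cancel₀ ht, one_smul]
        abel
      · have htx : sipX (t • x) e ≠ 0 := by
          rw [sip_smul_left hX]; exact mul_ne_zero ht hx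
        rw [uG _ htx, uG x hx, homG t x ht hx]
  -- u is additive: mixed case first
  have hmix : ∀ x y : X, sipX x e = 0 → sipX y e ≠ 0 → u (x + y) = u x + u y := by
    intro x y hx hy
    have hxy : sipX (x + y) e ≠ 0 := by
      rw [sip_add_left hX, hx, zero_add]; exact hy
    obtain ⟨c, hc0, hc⟩ : ∃ c : ℝ, c ≠ 0 ∧ sipX y e - c * ‖e‖ ^ 2 ≠ 0 := by
      by_cases h1 : sipX y e - ‖e‖ ^ 2 = 0
      · refine ⟨-1, by norm_num, ?_⟩
        intro hcon
        apply hen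
        linarith
      · exact ⟨1, one_ne_zero, by rwa [one_mul]⟩
    have h1 : sipX (x + c • e) e ≠ 0 := by
      rw [sip_add_left hX, hx, zero_add, sip_smul_left hX, hee]
      exact mul_ne_zero hc0 hen
    have h2 : sipX (y - c • e) e ≠ 0 := by
      rw [sub_eq_add_neg, sip_add_left hX, ← neg_smul, sip_smul_left hX, hee]
      intro hcon
      apply hc
      linarith
    have h3 : x + y = x + c • e + (y - c • e) := by abel
    have h4 : sipX (x + c • e + (y - c • e)) e ≠ 0 := by rw [← h3]; exact hxy
    have h5 : sipX (c • e) e ≠ 0 := by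
      rw [sip_smul_left hX, hee]; exact mul_ne_zero hc0 hen
    have h6 : sipX (y - c • e + c • e) e ≠ 0 := by
      have h7 : y - c • e + c • e = y := by abel
      rw [h7]; exact hy
    have h8 : u0 (y - c • e + c • e) = u0 (y - c • e) + u0 (c • e) :=
      addG (y - c • e) (c • e) h2 h5 h6
    have h9 : y - c • e + c • e = y := by abel
    rw [h9] at h8
    rw [uG _ hxy, h3, addG _ _ h1 h2 h4, hshift x hx c hc0, uG y hy, h8,
      homG c e hc0 heG]
    abel
  have hadd : ∀ x y : X, u (x + y) = u x + u y := by
    intro x y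
    by_cases hx : sipX x e = 0 <;> by_cases hy : sipX y e = 0
    · -- both bad
      have hxy : sipX (x + y) e = 0 := by rw [sip_add_left hX, hx, hy, add_zero]
      have hye : sipX (y + e) e ≠ 0 := by
        rw [sip_add_left hX, hy, zero_add]; exact heG
      have h1 : u (x + (y + e)) = u x + u (y + e) := hmix x (y + e) hx hye
      have h2 : sipX (x + (y + e)) e ≠ 0 := by
        rw [sip_add_left hX, hx, zero_add]; exact hye
      rw [uG _ h2] at h1
      have h3 : x + (y + e) = x + y + e := by abel
      rw [h3] at h1
      have h4 := hshift (x + y) hxy 1 one_ne_zero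
      rw [one_smul, one_smul] at h4
      rw [h4] at h1
      have h5 := hshift y hy 1 one_ne_zero
      rw [one_smul, one_smul] at h5
      rw [uG (y + e) hye, h5] at h1
      have h6 : u (x + y) + u0 e = u x + u y + u0 e := by
        rw [h1]; abel
      exact add_right_cancel h6
    · exact hmix x y hx hy
    · have h1 := hmix y x hy hx
      rw [add_comm y x] at h1
      rw [h1]; abel
    · by_cases hxy : sipX (x + y) e = 0
      · -- good + good = bad
        obtain ⟨c, hc0, hc⟩ : ∃ c : ℝ, c ≠ 0 ∧ sipX y e + c * ‖e‖ ^ 2 ≠ 0 := by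
          by_cases h1 : sipX y e + ‖e‖ ^ 2 = 0
          · refine ⟨-1, by norm_num, ?_⟩
            intro hcon
            apply hen
            linarith
          · exact ⟨1, one_ne_zero, by rwa [one_mul]⟩
        have h1 : sipX (y + c • e) e ≠ 0 := by
          rw [sip_add_left hX, sip_smul_left hX, hee]; exact hc
        have h2 : sipX (x + (y + c • e)) e ≠ 0 := by
          rw [sip_add_left hX, sip_add_left hX, sip_smul_left hX, hee]
          have h2' : sipX x e + sipX y e = 0 := by
            rw [← sip_add_left hX]; exact hxy
          intro hcon
          apply mul_ne_zero hc0 hen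
          linarith
        have h3 := addG x (y + c • e) hx h1 h2
        have h5 : sipX (c • e) e ≠ 0 := by
          rw [sip_smul_left hX, hee]; exact mul_ne_zero hc0 hen
        have h6 : sipX (y + c • e) e ≠ 0 := h1
        have h7 := addG y (c • e) hy h5 h6
        have h8 : x + (y + c • e) = x + y + c • e := by abel
        rw [h8] at h3
        rw [hshift (x + y) hxy c hc0] at h3
        rw [h7, homG c e hc0 heG] at h3
        -- h3 : u (x+y) + c • u0 e = u0 x + (u0 y + c • u0 e)
        have h9 : u (x + y) + c • u0 e = u x + u y + c • u0 e := by
          rw [h3, uG x hx, uG y hy]; abel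
        exact add_right_cancel h9
      · rw [uG _ hxy, uG x hx, uG y hy]
        exact addG x y hx hy hxy
  -- package as a linear map
  refine ⟨{ toFun := u, map_add' := hadd,
            map_smul' := fun t x => by simpa using hsmul t x }, ?_, ?_, ?_⟩
  · intro y
    obtain ⟨x, rfl⟩ := hsurj y
    rcases uPM x with h | h
    · exact ⟨x, h⟩
    · refine ⟨-x, ?_⟩
      show u (-x) = f x
      have h1 : u (-x) = -u x := by
        have h2 := hsmul (-1) x
        rw [neg_one_smul, neg_one_smul] at h2
        exact h2
      rw [h1, h, neg_neg]
  · intro x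
    show ‖u x‖ = ‖x‖
    rcases uPM x with h | h
    · rw [h, hfn]
    · rw [h, norm_neg, hfn]
  · refine ⟨fun x => if f x = u x then 1 else -1, fun x => ?_, fun x => ?_⟩
    · by_cases h : f x = u x <;> simp [h]
    · show f x = (if f x = u x then (1:ℝ) else (-1:ℝ)) • u x
      by_cases h : f x = u x
      · rw [if_pos h, one_smul]
        exact h
      · rw [if_neg h]
        rcases uPM x with h1 | h1
        · exact absurd h1.symm h
        · rw [neg_one_smul, h1, neg_neg]
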